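/- Let d ≥ 0, e ≥ 1, and k = e + d. For any non-negative integers α, β, r, p with α + β = p ≤ d, r ≥ α, and r + β ≤ d, the 2-adic valuation of C(2^k, r − α + 1) is at least p + e. -/

import Mathlib

/-- binary digit sum -/
def s2 (n : ℕ) : ℕ := (Nat.digits 2 n).sum

/-- 2-adic valuation -/
def nu (n : ℕ) : ℕ := padicValNat 2 n

lemma nu_choose_pow {k c : ℕ} (hc : c ≠ 0) (hck : c ≤ 2 ^ k) :
    nu (Nat.choose (2 ^ k) c) = k - padicValNat 2 c := by
  have : Fact (Nat.Prime 2) := ⟨Nat.prime_two⟩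
  have hpos : 0 < Nat.choose (2 ^ k) c := Nat.choose_pos hck
  have hE := Nat.Prime.emultiplicity_choose_prime_pow Nat.prime_two hck hc
  have h1 : (padicValNat 2 (Nat.choose (2 ^ k) c) : ℕ∞) =
      emultiplicity 2 (Nat.choose (2 ^ k) c) := padicValNat_eq_emultiplicity hpos.ne'
  have h2 : padicValNat 2 c = multiplicity 2 c := padicValNat_def hc
  unfold nu
  rw [h2]
  exact_mod_cast h1.trans hE

lemma padicValNat_le_of_le {c m : ℕ} (hc : c ≠ 0) (hcm : c < 2 ^ (m + 1)) :
    padicValNat 2 c ≤ m := by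
  by_contra h
  push_neg at h
  have hd : 2 ^ (m + 1) ∣ c :=
    dvd_trans (pow_dvd_pow 2 h) (pow_padicValNat_dvd)
  exact absurd (Nat.le_of_dvd (Nat.pos_of_ne_zero hc) hd) (by omega)

theorem stmt17 (d e k α β r p : ℕ) (he : 1 ≤ e) (hk : k = e + d)
    (hp : α + β = p) (hpd : p ≤ d) (hr : α ≤ r) (hrb : r + β ≤ d) :
    p + e ≤ nu (Nat.choose (2 ^ k) (r - α + 1)) := by
  set c := r - α + 1 with hc
  have hc0 : c ≠ 0 := by omega
  have hcle : c ≤ d - p + 1 := by omega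
  have hlt : c < 2 ^ (d - p + 1) := lt_of_le_of_lt hcle (by
    have := Nat.lt_two_pow_self (n := d - p + 1); omega)
  have hck : c ≤ 2 ^ k := by
    have h1 : 2 ^ (d - p + 1) ≤ 2 ^ k := Nat.pow_le_pow_right (by norm_num) (by omega)
    omega
  have hv : padicValNat 2 c ≤ d - p := padicValNat_le_of_le hc0 hlt
  rw [nu_choose_pow hc0 hck]
  omega
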